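/- For n×n real symmetric positive semidefinite matrices A and B, det(A+B)^{1/n} ≥ det(A)^{1/n} + det(B)^{1/n}. -/

import Mathlib

open Matrix

lemma psd_posDef_of_det_ne_zero {n : ℕ} {A : Matrix (Fin n) (Fin n) ℝ}
    (hA : A.PosSemidef) (h : A.det ≠ 0) : A.PosDef := by
  refine posDef_iff_dotProduct_mulVec.mpr ⟨hA.1, fun x hx => ?_⟩
  rcases (hA.dotProduct_mulVec_nonneg x).lt_or_eq with hlt | heq
  · exact hlt
  · exfalso
    have h0 : A *ᵥ x = 0 := (hA.dotProduct_mulVec_zero_iff x).1 heq.symm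
    apply hx
    have := congrArg (fun v => A⁻¹ *ᵥ v) h0
    simpa [Matrix.mulVec_mulVec, Matrix.nonsing_inv_mul A (isUnit_iff_ne_zero.mpr h)]
      using this

lemma psd_det_nonneg {n : ℕ} {A : Matrix (Fin n) (Fin n) ℝ}
    (hA : A.PosSemidef) : 0 ≤ A.det := by
  rw [hA.1.det_eq_prod_eigenvalues]
  exact Finset.prod_nonneg fun i _ => by simpa using hA.eigenvalues_nonneg i

open Finset in
lemma geom_superadd {n : ℕ} (hn : 0 < n) (a b : Fin n → ℝ)
    (ha : ∀ i, 0 ≤ a i) (hb : ∀ i, 0 ≤ b i) :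
    (∏ i, a i) ^ ((n : ℝ)⁻¹) + (∏ i, b i) ^ ((n : ℝ)⁻¹)
      ≤ (∏ i, (a i + b i)) ^ ((n : ℝ)⁻¹) := by
  have hn' : (0:ℝ) < (n:ℝ) := by exact_mod_cast hn
  by_cases h : ∀ i, 0 < a i + b i
  · have hs : 0 < ∏ i, (a i + b i) := Finset.prod_pos (fun i _ => h i)
    have hw : ∑ _i : Fin n, (n:ℝ)⁻¹ = 1 := by
      simp [Finset.sum_const, mul_inv_cancel₀ hn'.ne']
    have key : ∀ c : Fin n → ℝ, (∀ i, 0 ≤ c i) →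
        ∏ i, (c i / (a i + b i)) ^ ((n:ℝ)⁻¹) ≤ ∑ i, (n:ℝ)⁻¹ * (c i / (a i + b i)) := by
      intro c hc
      exact Real.geom_mean_le_arith_mean_weighted Finset.univ _ _
        (fun i _ => by positivity) hw (fun i _ => div_nonneg (hc i) (h i).le)
    have hA := key a ha
    have hB := key b hb
    have prodeq : ∀ c : Fin n → ℝ, (∀ i, 0 ≤ c i) →
        ∏ i, (c i / (a i + b i)) ^ ((n:ℝ)⁻¹)
          = (∏ i, c i) ^ ((n:ℝ)⁻¹) / (∏ i, (a i + b i)) ^ ((n:ℝ)⁻¹) := by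
      intro c hc
      rw [← Real.finset_prod_rpow _ _ (fun i _ => hc i), ← Real.finset_prod_rpow _ _
        (fun i _ => (h i).le), ← Finset.prod_div_distrib]
      exact Finset.prod_congr rfl fun i _ => Real.div_rpow (hc i) (h i).le _
    rw [prodeq a ha] at hA
    rw [prodeq b hb] at hB
    have hsum : (∑ i, (n:ℝ)⁻¹ * (a i / (a i + b i)))
        + (∑ i, (n:ℝ)⁻¹ * (b i / (a i + b i))) = 1 := by
      rw [← Finset.sum_add_distrib, ← hw]
      refine Finset.sum_congr rfl fun i _ => ?_
      rw [← mul_add, ← add_div, div_self (h i).ne']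
      ring
    have := add_le_add hA hB
    rw [hsum] at this
    rw [← add_div, div_le_one (by positivity)] at this
    exact this
  · push_neg at h
    obtain ⟨i, hi⟩ := h
    have hai : a i = 0 := le_antisymm (by linarith [hb i]) (ha i)
    have hbi : b i = 0 := le_antisymm (by linarith [ha i]) (hb i)
    have h1 : ∏ j, a j = 0 := Finset.prod_eq_zero (Finset.mem_univ i) hai
    have h2 : ∏ j, b j = 0 := Finset.prod_eq_zero (Finset.mem_univ i) hbi
    rw [h1, h2, Real.zero_rpow (inv_ne_zero (by exact_mod_cast hn.ne' : (n:ℝ) ≠ 0))]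
    have h0 : 0 ≤ ∏ j, (a j + b j) := Finset.prod_nonneg fun j _ => add_nonneg (ha j) (hb j)
    simpa using Real.rpow_nonneg h0 _



open scoped MatrixOrder in
lemma brunn_det_posdef_case {n : ℕ} (hn : 0 < n) (A B : Matrix (Fin n) (Fin n) ℝ)
    (hA : A.PosDef) (hB : B.PosSemidef) :
    A.det ^ ((n : ℝ)⁻¹) + B.det ^ ((n : ℝ)⁻¹) ≤ (A + B).det ^ ((n : ℝ)⁻¹) := by
  have hApsd := hA.posSemidef
  set C := CFC.sqrt A with hCdef
  have hCpsd : C.PosSemidef := (CFC.sqrt_nonneg A).posSemidef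
  have hCC : C * C = A := CFC.sqrt_mul_sqrt_self A hApsd.nonneg
  have hdetA : 0 < A.det := hA.det_pos
  have hdetC : C.det * C.det = A.det := by rw [← Matrix.det_mul, hCC]
  have hCdet : C.det ≠ 0 := by
    intro h; rw [h, mul_zero] at hdetC; exact hdetA.ne' hdetC.symm
  have hCu : IsUnit C.det := isUnit_iff_ne_zero.mpr hCdet
  have h1 : C * C⁻¹ = 1 := Matrix.mul_nonsing_inv C hCu
  have h2 : C⁻¹ * C = 1 := Matrix.nonsing_inv_mul C hCu
  set M := C⁻¹ * B * C⁻¹ with hMdef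
  have hCinvH : C⁻¹ᴴ = C⁻¹ := by rw [Matrix.conjTranspose_nonsing_inv, hCpsd.1]
  have hMpsd : M.PosSemidef := by
    have := hB.mul_mul_conjTranspose_same (C⁻¹)
    rwa [hCinvH] at this
  have hCMC : C * M * C = B := by
    rw [hMdef]
    have : C * (C⁻¹ * B * C⁻¹) * C = (C * C⁻¹) * B * (C⁻¹ * C) := by
      simp only [Matrix.mul_assoc]
    rw [this, h1, h2, one_mul, mul_one]
  have hAB : A + B = C * (1 + M) * C := by
    rw [mul_add, add_mul, mul_one, hCC, hCMC]
  -- determinants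
  have hdetAB : (A + B).det = A.det * (1 + M).det := by
    rw [hAB, Matrix.det_mul, Matrix.det_mul, mul_comm, ← mul_assoc, hdetC]
  have hdetB : B.det = A.det * M.det := by
    rw [← hCMC, Matrix.det_mul, Matrix.det_mul, mul_comm, ← mul_assoc, hdetC]
  -- eigenvalues of M
  set μ := hMpsd.1.eigenvalues with hμdef
  have hμ : ∀ i, 0 ≤ μ i := hMpsd.eigenvalues_nonneg
  have hdetM : M.det = ∏ i, μ i := by
    simpa using hMpsd.1.det_eq_prod_eigenvalues
  have hdet1M : (1 + M).det = ∏ i, ((1:ℝ) + μ i) := by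
    set U := (hMpsd.1.eigenvectorUnitary : Matrix (Fin n) (Fin n) ℝ) with hU
    have hUU : U * star U = 1 := Matrix.mem_unitaryGroup_iff.mp hMpsd.1.eigenvectorUnitary.2
    have hspec := hMpsd.1.spectral_theorem
    rw [Unitary.conjStarAlgAut_apply] at hspec
    have key : 1 + M = U * (1 + Matrix.diagonal (RCLike.ofReal ∘ μ)) * star U := by
      rw [mul_add, add_mul, mul_one, hUU, ← hspec]
    rw [key, Matrix.det_mul, Matrix.det_mul, mul_comm, ← mul_assoc, ← Matrix.det_mul,
      Matrix.mem_unitaryGroup_iff'.mp hMpsd.1.eigenvectorUnitary.2, Matrix.det_one, one_mul]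
    rw [← Matrix.diagonal_one, Matrix.diagonal_add, Matrix.det_diagonal]
    norm_num
  -- assemble
  have hMdet_nonneg : 0 ≤ M.det := by
    rw [hdetM]; exact Finset.prod_nonneg fun i _ => hμ i
  have key := geom_superadd hn (fun _ => (1:ℝ)) μ (fun _ => zero_le_one) hμ
  simp only [Finset.prod_const_one, Real.one_rpow] at key
  calc A.det ^ ((n : ℝ)⁻¹) + B.det ^ ((n : ℝ)⁻¹)
      = A.det ^ ((n : ℝ)⁻¹) * (1 + M.det ^ ((n : ℝ)⁻¹)) := by
        rw [hdetB, Real.mul_rpow hdetA.le hMdet_nonneg]; ring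
    _ ≤ A.det ^ ((n : ℝ)⁻¹) * ((∏ i, ((1:ℝ) + μ i)) ^ ((n : ℝ)⁻¹)) := by
        apply mul_le_mul_of_nonneg_left _ (Real.rpow_nonneg hdetA.le _)
        rw [← hdetM] at key
        exact key
    _ = (A + B).det ^ ((n : ℝ)⁻¹) := by
        rw [hdetAB, Real.mul_rpow hdetA.le, hdet1M]
        rw [hdet1M] at *
        exact Finset.prod_nonneg fun i _ => by linarith [hμ i]

theorem brunn_minkowski_det {n : ℕ} (hn : 0 < n)
    (A B : Matrix (Fin n) (Fin n) ℝ)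
    (hA : A.PosSemidef) (hB : B.PosSemidef) :
    A.det ^ ((n : ℝ)⁻¹) + B.det ^ ((n : ℝ)⁻¹) ≤ (A + B).det ^ ((n : ℝ)⁻¹) := by
  by_cases hAd : A.det = 0
  · by_cases hBd : B.det = 0
    · rw [hAd, hBd, Real.zero_rpow (inv_ne_zero (by exact_mod_cast hn.ne' : (n:ℝ) ≠ 0))]
      have := psd_det_nonneg (hA.add hB)
      simpa using Real.rpow_nonneg this _
    · have hB' : B.PosDef := psd_posDef_of_det_ne_zero hB hBd
      rw [add_comm A B, add_comm (A.det ^ ((n : ℝ)⁻¹))]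
      exact brunn_det_posdef_case hn B A hB' hA
  · exact brunn_det_posdef_case hn A B (psd_posDef_of_det_ne_zero hA hAd) hB
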